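/- For integers e ≥ 3 odd and 0 ≤ t < (e−1)/2, the partition ν_{t,e} := (t+2, t+1, ..., 3, 2, 1^{e−2t−2}) has e-core equal to the staircase partition Δ_t and e-weight equal to 1. -/

import Mathlib

/-- The partition associated to a β-set `B = {b₁ > b₂ > ⋯ > b_k} ⊆ ℕ`: its `j`-th part
(0-indexed) is `b_{j+1} − (k − 1 − j)`. -/
def betaToPart (B : Finset ℕ) (j : ℕ) : ℕ :=
  if j < B.card then (B.sort (· ≤ ·)).getD (B.card - 1 - j) 0 - (B.card - 1 - j) else 0

/-- Removing an `e`-hook from the partition with β-set `B`: replace an element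
`y ∈ B` with `y ≥ e` and `y − e ∉ B` by `y − e`. -/
def hookRel (e : ℕ) (B B' : Finset ℕ) : Prop :=
  ∃ y ∈ B, e ≤ y ∧ y - e ∉ B ∧ B' = insert (y - e) (B.erase y)

/-- A β-set has no removable `e`-hook. -/
def NoEHook (e : ℕ) (C : Finset ℕ) : Prop := ∀ y ∈ C, e ≤ y → y - e ∈ C

/-- The staircase partition `Δ_t = (t, t−1, ..., 1)`, as a function. -/
def stair (t : ℕ) : ℕ → ℕ := fun j => t - j

/-- The partition with β-set `B` has `e`-core equal to `core`: some sequence of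
`e`-hook removals starting from `B` reaches a β-set with no `e`-hook whose associated
partition is `core`. -/
def HasECore (e : ℕ) (B : Finset ℕ) (core : ℕ → ℕ) : Prop :=
  ∃ C : Finset ℕ, Relation.ReflTransGen (hookRel e) B C ∧ NoEHook e C ∧ betaToPart C = core


/-- The partition `ν_{t,e} = (t+2, t+1, ..., 3, 2, 1^{e−2t−2})`, as a function giving
its `j`-th part (0-indexed). -/
def nuPart (t e : ℕ) : ℕ → ℕ := fun j =>
  if j ≤ t then t + 2 - j
  else if j < (t + 1) + (e - 2 * t - 2) then 1 else 0

/-- Auxiliary: the `i`-th element of the β-set of the core. -/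
def gAux (N : ℕ) (i : ℕ) : ℕ := if i ≤ N then i else N + 2 * (i - N)

/-- Strictly sorted lists of naturals grow at least as fast as the index. -/
lemma le_getElem_of_sorted {L : List ℕ} (hL : L.Pairwise (· < ·)) :
    ∀ i (h : i < L.length), i ≤ L[i] := by
  intro i
  induction i with
  | zero => intro _; exact Nat.zero_le _
  | succ n ih =>
    intro h
    have hn : n < L.length := Nat.lt_of_succ_lt h
    have hlt : L.get ⟨n, hn⟩ < L.get ⟨n + 1, h⟩ :=
      hL.rel_get_of_lt (by simp [Fin.lt_def])
    simp only [List.get_eq_getElem] at hlt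
    have := ih hn
    omega

theorem stmt10 (e t : ℕ) (he : Odd e) (he3 : 3 ≤ e) (ht : t < (e - 1) / 2)
    (B : Finset ℕ) (hB : betaToPart B = nuPart t e) :
    ∃ C : Finset ℕ, hookRel e B C ∧ NoEHook e C ∧ betaToPart C = stair t := by
  have he2t : 2 * t + 3 ≤ e := by
    obtain ⟨m, hm⟩ := he; omega
  classical
  set k := B.card with hkdef
  set L := B.sort (· ≤ ·) with hLdef
  have hLlen : L.length = k := Finset.length_sort _
  have hLsorted : L.Pairwise (· < ·) := (Finset.sortedLT_sort B).pairwise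
  have hbeta : ∀ j, (if j < k then L.getD (k - 1 - j) 0 - (k - 1 - j) else 0) = nuPart t e j :=
    fun j => congrFun hB j
  -- k is at least the number of nonzero parts
  have hk : e - t - 1 ≤ k := by
    by_contra hlt
    have h1 := hbeta (e - t - 2)
    rw [if_neg (by omega)] at h1
    simp only [nuPart] at h1
    split_ifs at h1 <;> omega
  set N := k - t - 1 with hN
  set s := k - (e - t - 1) with hs
  -- the sorted elements of B
  have hLval : ∀ i, ∀ h : i < k, L[i]'(by omega) = nuPart t e (k - 1 - i) + i := by
    intro i h
    have h1 := hbeta (k - 1 - i)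
    rw [if_pos (by omega), show k - 1 - (k - 1 - i) = i by omega] at h1
    rw [List.getD_eq_getElem _ _ (by omega)] at h1
    have h2 := le_getElem_of_sorted hLsorted i (by omega)
    omega
  -- membership characterisation of B
  have hmemB : ∀ x : ℕ,
      x ∈ B ↔ ((x ≤ N ∧ x ≠ s) ∨ (N + 2 ≤ x ∧ x ≤ N + 2 * t + 2 ∧ x % 2 = N % 2)) := by
    intro x
    rw [show (x ∈ B) ↔ x ∈ L from (Finset.mem_sort _).symm, List.mem_iff_getElem]
    constructor
    · rintro ⟨i, hi, hx⟩
      rw [hLval i (by omega)] at hx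
      simp only [nuPart] at hx
      split_ifs at hx <;> omega
    · rintro (⟨hx1, hx2⟩ | ⟨hx1, hx2, hx3⟩)
      · by_cases hxs : x < s
        · refine ⟨x, by omega, ?_⟩
          rw [hLval x (by omega)]
          simp only [nuPart]; split_ifs <;> omega
        · refine ⟨x - 1, by omega, ?_⟩
          rw [hLval (x - 1) (by omega)]
          simp only [nuPart]; split_ifs <;> omega
      · refine ⟨N + (x - N - 2) / 2, by omega, ?_⟩
        rw [hLval _ (by omega)]
        simp only [nuPart]; split_ifs <;> omega
  -- the hook removal
  have hyB : N + 2 + 2 * t ∈ B := by rw [hmemB]; omega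
  have hsB : s ∉ B := by rw [hmemB]; omega
  set C := insert s (B.erase (N + 2 + 2 * t)) with hCdef
  have hmemC : ∀ x : ℕ,
      x ∈ C ↔ (x ≤ N ∨ (N + 2 ≤ x ∧ x ≤ N + 2 * t ∧ x % 2 = N % 2)) := by
    intro x
    rw [hCdef]
    simp only [Finset.mem_insert, Finset.mem_erase, hmemB x]
    omega
  -- the sorted list of C
  have h1 : ((List.range k).map (gAux N)).Pairwise (· < ·) := by
    rw [List.pairwise_map]
    exact List.Pairwise.imp
      (fun {a b} hab => by unfold gAux; split_ifs <;> omega)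
      (List.pairwise_lt_range (n := k))
  have h2 : ((List.range k).map (gAux N)).Nodup :=
    List.Pairwise.imp (fun {a b} hab => Nat.ne_of_lt hab) h1
  have h3 : ((List.range k).map (gAux N)).Pairwise (· ≤ ·) :=
    List.Pairwise.imp (fun {a b} hab => Nat.le_of_lt hab) h1
  have h4 : C = ((List.range k).map (gAux N)).toFinset := by
    ext x
    rw [hmemC x]
    simp only [List.mem_toFinset, List.mem_map, List.mem_range]
    constructor
    · rintro (h | h)
      · exact ⟨x, by omega, by unfold gAux; rw [if_pos h]⟩
      · refine ⟨N + (x - N) / 2, by omega, ?_⟩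
        unfold gAux; split_ifs <;> omega
    · rintro ⟨i, hik, hgi⟩
      unfold gAux at hgi; split_ifs at hgi <;> omega
  have hCL : C.sort (· ≤ ·) = (List.range k).map (gAux N) := by
    rw [h4]
    exact (List.toFinset_sort (· ≤ ·) h2).mpr h3
  have hcard : C.card = k := by
    have h := Finset.length_sort (α := ℕ) (· ≤ ·) (s := C)
    rw [hCL, List.length_map, List.length_range] at h
    omega
  refine ⟨C, ⟨N + 2 + 2 * t, hyB, by omega, ?_, ?_⟩, ?_, ?_⟩
  · rw [show N + 2 + 2 * t - e = s by omega]; exact hsB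
  · rw [hCdef, show N + 2 + 2 * t - e = s by omega]
  · -- NoEHook
    intro y hy hey
    rw [hmemC] at hy
    rw [hmemC]
    omega
  · -- betaToPart C = stair t
    funext j
    simp only [betaToPart, stair, hcard, hCL]
    by_cases hj : j < k
    · rw [if_pos hj, List.getD_eq_getElem _ _
        (by rw [List.length_map, List.length_range]; omega)]
      simp only [List.getElem_map, List.getElem_range]
      unfold gAux; split_ifs <;> omega
    · rw [if_neg hj]; omega
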